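/- Let D be a binary string of length n and let G be a 2D SLP of size s generating the 1×n 2D string whose single row is D (i.e., a one-dimensional SLP for D). Then there exists a 2D SLP of size at most 3s generating the n×n 2D string B_D over the alphabet {0,1}×{0,1} defined by B_D[i][j] = ⟨D[i], D[j]⟩. -/

import Mathlib

/-!
Statement 8: Let `D` be a binary string of length `n` and let `G` be a 2D SLP of
size `s` generating the `1 × n` 2D string whose single row is `D`.  Then there
exists a 2D SLP of size at most `3s` generating the `n × n` 2D string `B_D` over
the alphabet `{0,1} × {0,1}` defined by `B_D[i][j] = ⟨D[i], D[j]⟩`.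
-/

/-- A rule of a 2D SLP: terminal, horizontal concatenation, or vertical concatenation. -/
inductive Rule2D (α : Type*) (V : ℕ) : Type _ where
  | term : α → Rule2D α V
  | horiz : Fin V → Fin V → Rule2D α V
  | vert : Fin V → Fin V → Rule2D α V

/-- Variables referenced by a rule. -/
def Rule2D.refs {α : Type*} {V : ℕ} : Rule2D α V → List (Fin V)
  | .term _ => []
  | .horiz B C => [B, C]
  | .vert B C => [B, C]

/-- Size of a rule: terminal rules count 1, concatenation rules count 2. -/
def Rule2D.size {α : Type*} {V : ℕ} : Rule2D α V → ℕ
  | .term _ => 1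
  | .horiz _ _ => 2
  | .vert _ _ => 2

/-- Consistency of the recorded expansions with a rule. -/
def ConsistentAt {α : Type*} {V : ℕ} (rows cols : Fin V → ℕ)
    (ent : Fin V → ℕ → ℕ → α) (A : Fin V) : Rule2D α V → Prop
  | .term a => rows A = 1 ∧ cols A = 1 ∧ ent A 0 0 = a
  | .horiz B C => rows A = rows B ∧ rows A = rows C ∧ cols A = cols B + cols C ∧
      (∀ i j, i < rows B → j < cols B → ent A i j = ent B i j) ∧
      (∀ i j, i < rows C → j < cols C → ent A i (cols B + j) = ent C i j)
  | .vert B C => cols A = cols B ∧ cols A = cols C ∧ rows A = rows B + rows C ∧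
      (∀ i j, i < rows B → j < cols B → ent A i j = ent B i j) ∧
      (∀ i j, i < rows C → j < cols C → ent A (rows B + i) j = ent C i j)

/-- A 2D straight-line program over the alphabet `α`. -/
structure SLP2D (α : Type*) where
  V : ℕ
  rule : Fin V → Rule2D α V
  start : Fin V
  rows : Fin V → ℕ
  cols : Fin V → ℕ
  ent : Fin V → ℕ → ℕ → α
  acyclic : ∀ A : Fin V, ∀ B ∈ (rule A).refs, B < A
  consistent : ∀ A : Fin V, ConsistentAt rows cols ent A (rule A)

/-- The size of a 2D SLP: the sum of the sizes of its rules. -/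
def SLP2D.size {α : Type*} (G : SLP2D α) : ℕ := ∑ A : Fin G.V, (G.rule A).size

/-- `G` generates the `m × n` 2D string `M` (0-based entries). -/
def SLP2D.Generates {α : Type*} (G : SLP2D α) (m n : ℕ) (M : ℕ → ℕ → α) : Prop :=
  G.rows G.start = m ∧ G.cols G.start = n ∧
  ∀ i j, i < m → j < n → G.ent G.start i j = M i j

namespace S8

/-- All variables of an SLP have positive rows and cols. -/
lemma pos {α : Type*} (G : SLP2D α) : ∀ A : Fin G.V, 0 < G.rows A ∧ 0 < G.cols A := by
  have H : ∀ k, ∀ A : Fin G.V, A.val = k → 0 < G.rows A ∧ 0 < G.cols A := by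
    intro k
    induction k using Nat.strong_induction_on with
    | _ k ih =>
      intro A hA
      have hc := G.consistent A
      cases hr : G.rule A with
      | term a =>
        rw [hr] at hc
        obtain ⟨h1, h2, _⟩ := hc
        omega
      | horiz B C =>
        rw [hr] at hc
        obtain ⟨h1, h2, h3, _⟩ := hc
        have hB : B < A := G.acyclic A B (by rw [hr]; simp [Rule2D.refs])
        have hC : C < A := G.acyclic A C (by rw [hr]; simp [Rule2D.refs])
        have iB := ih B.val (hA ▸ Fin.lt_def.mp hB) B rfl
        have iC := ih C.val (hA ▸ Fin.lt_def.mp hC) C rfl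
        omega
      | vert B C =>
        rw [hr] at hc
        obtain ⟨h1, h2, h3, _⟩ := hc
        have hB : B < A := G.acyclic A B (by rw [hr]; simp [Rule2D.refs])
        have hC : C < A := G.acyclic A C (by rw [hr]; simp [Rule2D.refs])
        have iB := ih B.val (hA ▸ Fin.lt_def.mp hB) B rfl
        have iC := ih C.val (hA ▸ Fin.lt_def.mp hC) C rfl
        omega
  exact fun A => H A.val A rfl

variable (n : ℕ) (D : ℕ → Bool) (G : SLP2D Bool)

def emb0 (B : Fin G.V) : Fin (3 * G.V) := ⟨B.val, by have := B.isLt; omega⟩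
def emb1 (B : Fin G.V) : Fin (3 * G.V) := ⟨G.V + B.val, by have := B.isLt; omega⟩
def emb2 (B : Fin G.V) : Fin (3 * G.V) := ⟨2 * G.V + B.val, by have := B.isLt; omega⟩

/-- Mapping of a child variable: terminals map to the corresponding copy's start. -/
def fm (B : Fin G.V) : Fin (3 * G.V) :=
  match G.rule B with
  | .term a => if a then emb1 G G.start else emb0 G G.start
  | .horiz _ _ => emb2 G B
  | .vert _ _ => emb2 G B

def rl (X : Fin (3 * G.V)) : Rule2D (Bool × Bool) (3 * G.V) :=
  if h : X.val < G.V then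
    match G.rule ⟨X.val, h⟩ with
    | .term b => .term (b, false)
    | .horiz B C => .vert (emb0 G B) (emb0 G C)
    | .vert B C => .horiz (emb0 G B) (emb0 G C)
  else if h2 : X.val < 2 * G.V then
    match G.rule ⟨X.val - G.V, by omega⟩ with
    | .term b => .term (b, true)
    | .horiz B C => .vert (emb1 G B) (emb1 G C)
    | .vert B C => .horiz (emb1 G B) (emb1 G C)
  else
    match G.rule ⟨X.val - 2 * G.V, by have := X.isLt; omega⟩ with
    | .term a => .term (a, a)
    | .horiz B C => .horiz (fm G B) (fm G C)
    | .vert B C => .vert (fm G B) (fm G C)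

def rws (X : Fin (3 * G.V)) : ℕ :=
  if h : X.val < G.V then G.cols ⟨X.val, h⟩
  else if h2 : X.val < 2 * G.V then G.cols ⟨X.val - G.V, by omega⟩
  else
    match G.rule ⟨X.val - 2 * G.V, by have := X.isLt; omega⟩ with
    | .term _ => 1
    | _ => n * G.rows ⟨X.val - 2 * G.V, by have := X.isLt; omega⟩

def cls (X : Fin (3 * G.V)) : ℕ :=
  if h : X.val < G.V then G.rows ⟨X.val, h⟩
  else if h2 : X.val < 2 * G.V then G.rows ⟨X.val - G.V, by omega⟩
  else
    match G.rule ⟨X.val - 2 * G.V, by have := X.isLt; omega⟩ with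
    | .term _ => 1
    | _ => G.cols ⟨X.val - 2 * G.V, by have := X.isLt; omega⟩

def en (X : Fin (3 * G.V)) (i j : ℕ) : Bool × Bool :=
  if h : X.val < G.V then (G.ent ⟨X.val, h⟩ j i, false)
  else if h2 : X.val < 2 * G.V then (G.ent ⟨X.val - G.V, by omega⟩ j i, true)
  else
    match G.rule ⟨X.val - 2 * G.V, by have := X.isLt; omega⟩ with
    | .term a => (a, a)
    | _ => (D (i % n), G.ent ⟨X.val - 2 * G.V, by have := X.isLt; omega⟩ (i / n) j)

end S8

namespace S8
variable (n : ℕ) (D : ℕ → Bool) (G : SLP2D Bool)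

lemma rws_emb0 (B : Fin G.V) : rws n G (emb0 G B) = G.cols B := by
  simp only [rws]
  rw [dif_pos (show (emb0 G B).val < G.V from B.isLt)]
  rfl

lemma rws_emb1 (B : Fin G.V) : rws n G (emb1 G B) = G.cols B := by
  have := B.isLt
  simp only [rws]
  rw [dif_neg (show ¬ (emb1 G B).val < G.V by simp only [emb1]; omega),
    dif_pos (show (emb1 G B).val < 2 * G.V by simp only [emb1]; omega)]
  simp only [emb1, Nat.add_sub_cancel_left, Fin.eta]

lemma rws_emb2 (B : Fin G.V) :
    rws n G (emb2 G B) =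
      (match G.rule B with | .term _ => 1 | _ => n * G.rows B) := by
  have := B.isLt
  simp only [rws]
  rw [dif_neg (show ¬ (emb2 G B).val < G.V by simp only [emb2]; omega),
    dif_neg (show ¬ (emb2 G B).val < 2 * G.V by simp only [emb2]; omega)]
  simp only [emb2, Nat.add_sub_cancel_left, Fin.eta]

lemma cls_emb0 (B : Fin G.V) : cls G (emb0 G B) = G.rows B := by
  simp only [cls]
  rw [dif_pos (show (emb0 G B).val < G.V from B.isLt)]
  rfl

lemma cls_emb1 (B : Fin G.V) : cls G (emb1 G B) = G.rows B := by
  have := B.isLt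
  simp only [cls]
  rw [dif_neg (show ¬ (emb1 G B).val < G.V by simp only [emb1]; omega),
    dif_pos (show (emb1 G B).val < 2 * G.V by simp only [emb1]; omega)]
  simp only [emb1, Nat.add_sub_cancel_left, Fin.eta]

lemma cls_emb2 (B : Fin G.V) :
    cls G (emb2 G B) =
      (match G.rule B with | .term _ => 1 | _ => G.cols B) := by
  have := B.isLt
  simp only [cls]
  rw [dif_neg (show ¬ (emb2 G B).val < G.V by simp only [emb2]; omega),
    dif_neg (show ¬ (emb2 G B).val < 2 * G.V by simp only [emb2]; omega)]
  simp only [emb2, Nat.add_sub_cancel_left, Fin.eta]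

lemma en_emb0 (B : Fin G.V) (i j : ℕ) :
    en n D G (emb0 G B) i j = (G.ent B j i, false) := by
  simp only [en]
  rw [dif_pos (show (emb0 G B).val < G.V from B.isLt)]
  rfl

lemma en_emb1 (B : Fin G.V) (i j : ℕ) :
    en n D G (emb1 G B) i j = (G.ent B j i, true) := by
  have := B.isLt
  simp only [en]
  rw [dif_neg (show ¬ (emb1 G B).val < G.V by simp only [emb1]; omega),
    dif_pos (show (emb1 G B).val < 2 * G.V by simp only [emb1]; omega)]
  simp only [emb1, Nat.add_sub_cancel_left, Fin.eta]

lemma en_emb2 (B : Fin G.V) (i j : ℕ) :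
    en n D G (emb2 G B) i j =
      (match G.rule B with
        | .term a => (a, a)
        | _ => (D (i % n), G.ent B (i / n) j)) := by
  have := B.isLt
  simp only [en]
  rw [dif_neg (show ¬ (emb2 G B).val < G.V by simp only [emb2]; omega),
    dif_neg (show ¬ (emb2 G B).val < 2 * G.V by simp only [emb2]; omega)]
  simp only [emb2, Nat.add_sub_cancel_left, Fin.eta]

lemma rl_emb0 (B : Fin G.V) :
    rl G (emb0 G B) =
      (match G.rule B with
        | .term b => .term (b, false)
        | .horiz B1 C1 => .vert (emb0 G B1) (emb0 G C1)
        | .vert B1 C1 => .horiz (emb0 G B1) (emb0 G C1) : Rule2D (Bool × Bool) (3 * G.V)) := by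
  simp only [rl]
  rw [dif_pos (show (emb0 G B).val < G.V from B.isLt)]
  rfl

lemma rl_emb1 (B : Fin G.V) :
    rl G (emb1 G B) =
      (match G.rule B with
        | .term b => .term (b, true)
        | .horiz B1 C1 => .vert (emb1 G B1) (emb1 G C1)
        | .vert B1 C1 => .horiz (emb1 G B1) (emb1 G C1) : Rule2D (Bool × Bool) (3 * G.V)) := by
  have := B.isLt
  simp only [rl]
  rw [dif_neg (show ¬ (emb1 G B).val < G.V by simp only [emb1]; omega),
    dif_pos (show (emb1 G B).val < 2 * G.V by simp only [emb1]; omega)]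
  simp only [emb1, Nat.add_sub_cancel_left, Fin.eta]

lemma rl_emb2 (B : Fin G.V) :
    rl G (emb2 G B) =
      (match G.rule B with
        | .term a => .term (a, a)
        | .horiz B1 C1 => .horiz (fm G B1) (fm G C1)
        | .vert B1 C1 => .vert (fm G B1) (fm G C1) : Rule2D (Bool × Bool) (3 * G.V)) := by
  have := B.isLt
  simp only [rl]
  rw [dif_neg (show ¬ (emb2 G B).val < G.V by simp only [emb2]; omega),
    dif_neg (show ¬ (emb2 G B).val < 2 * G.V by simp only [emb2]; omega)]
  simp only [emb2, Nat.add_sub_cancel_left, Fin.eta]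

end S8

namespace S8
variable {n : ℕ} {D : ℕ → Bool} {G : SLP2D Bool}
variable (hr1 : G.rows G.start = 1) (hcn : G.cols G.start = n)
variable (hent : ∀ j, j < n → G.ent G.start 0 j = D j) (hn : 0 < n)

/-- Facts about a terminal variable. -/
lemma term_facts {B : Fin G.V} {a : Bool} (h : G.rule B = .term a) :
    G.rows B = 1 ∧ G.cols B = 1 ∧ G.ent B 0 0 = a := by
  have hc := G.consistent B
  rw [h] at hc
  exact hc

include hcn in
lemma fm_rows (B : Fin G.V) : rws n G (fm G B) = n * G.rows B := by
  cases h : G.rule B with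
  | term a =>
    obtain ⟨hb1, _, _⟩ := term_facts h
    cases a <;> simp [fm, h, rws_emb0, rws_emb1, hcn, hb1]
  | horiz B1 C1 => simp [fm, h, rws_emb2]
  | vert B1 C1 => simp [fm, h, rws_emb2]

include hr1 in
lemma fm_cols (B : Fin G.V) : cls G (fm G B) = G.cols B := by
  cases h : G.rule B with
  | term a =>
    obtain ⟨_, hb2, _⟩ := term_facts h
    cases a <;> simp [fm, h, cls_emb0, cls_emb1, hr1, hb2]
  | horiz B1 C1 => simp [fm, h, cls_emb2]
  | vert B1 C1 => simp [fm, h, cls_emb2]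

set_option linter.unusedSectionVars false in
include hent hn in
lemma fm_ent (B : Fin G.V) (i j : ℕ) (hi : i < n * G.rows B) (hj : j < G.cols B) :
    en n D G (fm G B) i j = (D (i % n), G.ent B (i / n) j) := by
  cases h : G.rule B with
  | term a =>
    obtain ⟨hb1, hb2, hb3⟩ := term_facts h
    have hj0 : j = 0 := by omega
    have hin : i < n := by rw [hb1, Nat.mul_one] at hi; exact hi
    have h1 : i % n = i := Nat.mod_eq_of_lt hin
    have h2 : i / n = 0 := Nat.div_eq_of_lt hin
    subst hj0
    cases a <;>
      simp [fm, h, en_emb0, en_emb1, h1, h2, hb3, hent i hin]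
  | horiz B1 C1 => simp [fm, h, en_emb2]
  | vert B1 C1 => simp [fm, h, en_emb2]

/-- Consistency for the copy-`false` block. -/
lemma consist0 (A : Fin G.V) :
    ConsistentAt (rws n G) (cls G) (en n D G) (emb0 G A) (rl G (emb0 G A)) := by
  have hc := G.consistent A
  rw [rl_emb0]
  cases h : G.rule A with
  | term a =>
    rw [h] at hc
    exact ⟨by rw [rws_emb0]; exact hc.2.1, by rw [cls_emb0]; exact hc.1,
      by rw [en_emb0, hc.2.2]⟩
  | horiz B1 C1 =>
    rw [h] at hc
    obtain ⟨h1, h2, h3, h4, h5⟩ := hc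
    refine ⟨?_, ?_, ?_, ?_, ?_⟩
    · rw [cls_emb0, cls_emb0, h1]
    · rw [cls_emb0, cls_emb0, h2]
    · rw [rws_emb0, rws_emb0, rws_emb0, h3]
    · intro i j hi hj
      rw [rws_emb0] at hi; rw [cls_emb0] at hj
      rw [en_emb0, en_emb0, h4 j i hj hi]
    · intro i j hi hj
      rw [rws_emb0] at hi; rw [cls_emb0] at hj
      rw [en_emb0, en_emb0, rws_emb0, h5 j i hj hi]
  | vert B1 C1 =>
    rw [h] at hc
    obtain ⟨h1, h2, h3, h4, h5⟩ := hc
    refine ⟨?_, ?_, ?_, ?_, ?_⟩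
    · rw [rws_emb0, rws_emb0, h1]
    · rw [rws_emb0, rws_emb0, h2]
    · rw [cls_emb0, cls_emb0, cls_emb0, h3]
    · intro i j hi hj
      rw [rws_emb0] at hi; rw [cls_emb0] at hj
      rw [en_emb0, en_emb0, h4 j i hj hi]
    · intro i j hi hj
      rw [rws_emb0] at hi; rw [cls_emb0] at hj
      rw [en_emb0, en_emb0, cls_emb0, h5 j i hj hi]

/-- Consistency for the copy-`true` block. -/
lemma consist1 (A : Fin G.V) :
    ConsistentAt (rws n G) (cls G) (en n D G) (emb1 G A) (rl G (emb1 G A)) := by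
  have hc := G.consistent A
  rw [rl_emb1]
  cases h : G.rule A with
  | term a =>
    rw [h] at hc
    exact ⟨by rw [rws_emb1]; exact hc.2.1, by rw [cls_emb1]; exact hc.1,
      by rw [en_emb1, hc.2.2]⟩
  | horiz B1 C1 =>
    rw [h] at hc
    obtain ⟨h1, h2, h3, h4, h5⟩ := hc
    refine ⟨?_, ?_, ?_, ?_, ?_⟩
    · rw [cls_emb1, cls_emb1, h1]
    · rw [cls_emb1, cls_emb1, h2]
    · rw [rws_emb1, rws_emb1, rws_emb1, h3]
    · intro i j hi hj
      rw [rws_emb1] at hi; rw [cls_emb1] at hj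
      rw [en_emb1, en_emb1, h4 j i hj hi]
    · intro i j hi hj
      rw [rws_emb1] at hi; rw [cls_emb1] at hj
      rw [en_emb1, en_emb1, rws_emb1, h5 j i hj hi]
  | vert B1 C1 =>
    rw [h] at hc
    obtain ⟨h1, h2, h3, h4, h5⟩ := hc
    refine ⟨?_, ?_, ?_, ?_, ?_⟩
    · rw [rws_emb1, rws_emb1, h1]
    · rw [rws_emb1, rws_emb1, h2]
    · rw [cls_emb1, cls_emb1, cls_emb1, h3]
    · intro i j hi hj
      rw [rws_emb1] at hi; rw [cls_emb1] at hj
      rw [en_emb1, en_emb1, h4 j i hj hi]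
    · intro i j hi hj
      rw [rws_emb1] at hi; rw [cls_emb1] at hj
      rw [en_emb1, en_emb1, cls_emb1, h5 j i hj hi]

include hr1 hcn hent hn in
/-- Consistency for the main block. -/
lemma consist2 (A : Fin G.V) :
    ConsistentAt (rws n G) (cls G) (en n D G) (emb2 G A) (rl G (emb2 G A)) := by
  have hc := G.consistent A
  rw [rl_emb2]
  cases h : G.rule A with
  | term a =>
    rw [h] at hc
    exact ⟨by simp [rws_emb2, h], by simp [cls_emb2, h], by simp [en_emb2, h]⟩
  | horiz B C =>
    rw [h] at hc
    obtain ⟨h1, h2, h3, h4, h5⟩ := hc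
    have hrA : rws n G (emb2 G A) = n * G.rows A := by simp [rws_emb2, h]
    have hcA : cls G (emb2 G A) = G.cols A := by simp [cls_emb2, h]
    have heA : ∀ i j, en n D G (emb2 G A) i j = (D (i % n), G.ent A (i / n) j) := by
      intro i j; simp [en_emb2, h]
    refine ⟨?_, ?_, ?_, ?_, ?_⟩
    · rw [hrA, fm_rows hcn, h1]
    · rw [hrA, fm_rows hcn, h2]
    · rw [hcA, fm_cols hr1, fm_cols hr1, h3]
    · intro i j hi hj
      rw [fm_rows hcn] at hi; rw [fm_cols hr1] at hj
      rw [heA, fm_ent hent hn B i j hi hj]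
      have hdiv : i / n < G.rows B := (Nat.div_lt_iff_lt_mul hn).mpr (by
        rw [Nat.mul_comm] at hi; exact hi)
      rw [h4 (i / n) j hdiv hj]
    · intro i j hi hj
      rw [fm_rows hcn] at hi; rw [fm_cols hr1] at hj
      rw [fm_cols hr1, heA, fm_ent hent hn C i j hi hj]
      have hdiv : i / n < G.rows C := (Nat.div_lt_iff_lt_mul hn).mpr (by
        rw [Nat.mul_comm] at hi; exact hi)
      rw [h5 (i / n) j hdiv hj]
  | vert B C =>
    rw [h] at hc
    obtain ⟨h1, h2, h3, h4, h5⟩ := hc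
    have hrA : rws n G (emb2 G A) = n * G.rows A := by simp [rws_emb2, h]
    have hcA : cls G (emb2 G A) = G.cols A := by simp [cls_emb2, h]
    have heA : ∀ i j, en n D G (emb2 G A) i j = (D (i % n), G.ent A (i / n) j) := by
      intro i j; simp [en_emb2, h]
    refine ⟨?_, ?_, ?_, ?_, ?_⟩
    · rw [hcA, fm_cols hr1, h1]
    · rw [hcA, fm_cols hr1, h2]
    · rw [hrA, fm_rows hcn, fm_rows hcn, h3, Nat.mul_add]
    · intro i j hi hj
      rw [fm_rows hcn] at hi; rw [fm_cols hr1] at hj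
      rw [heA, fm_ent hent hn B i j hi hj]
      have hdiv : i / n < G.rows B := (Nat.div_lt_iff_lt_mul hn).mpr (by
        rw [Nat.mul_comm] at hi; exact hi)
      rw [h4 (i / n) j hdiv hj]
    · intro i j hi hj
      rw [fm_rows hcn] at hi; rw [fm_cols hr1] at hj
      rw [fm_rows hcn, heA]
      have hmod : (n * G.rows B + i) % n = i % n := Nat.mul_add_mod n (G.rows B) i
      have hdv : (n * G.rows B + i) / n = G.rows B + i / n := Nat.mul_add_div hn _ _
      rw [hmod, hdv]
      have hdiv : i / n < G.rows C := (Nat.div_lt_iff_lt_mul hn).mpr (by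
        rw [Nat.mul_comm] at hi; exact hi)
      rw [h5 (i / n) j hdiv hj, fm_ent hent hn C i j hi hj]

end S8

namespace S8
variable {n : ℕ} {D : ℕ → Bool} {G : SLP2D Bool}

lemma exists_emb (X : Fin (3 * G.V)) :
    (∃ A, X = emb0 G A) ∨ (∃ A, X = emb1 G A) ∨ (∃ A, X = emb2 G A) := by
  have hX := X.isLt
  rcases lt_or_ge X.val G.V with h | h
  · exact Or.inl ⟨⟨X.val, h⟩, Fin.ext rfl⟩
  · rcases lt_or_ge X.val (2 * G.V) with h2 | h2
    · refine Or.inr (Or.inl ⟨⟨X.val - G.V, by omega⟩, Fin.ext ?_⟩)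
      simp only [emb1]; omega
    · refine Or.inr (Or.inr ⟨⟨X.val - 2 * G.V, by omega⟩, Fin.ext ?_⟩)
      simp only [emb2]; omega

lemma acy0 (A : Fin G.V) : ∀ Y ∈ (rl G (emb0 G A)).refs, Y < emb0 G A := by
  intro Y hY
  rw [rl_emb0] at hY
  cases h : G.rule A with
  | term a => rw [h] at hY; simp [Rule2D.refs] at hY
  | horiz B C =>
    rw [h] at hY; simp only [Rule2D.refs, List.mem_cons, List.mem_singleton,
      List.not_mem_nil, or_false] at hY
    have hB := Fin.lt_def.mp (G.acyclic A B (by rw [h]; simp [Rule2D.refs]))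
    have hC := Fin.lt_def.mp (G.acyclic A C (by rw [h]; simp [Rule2D.refs]))
    rcases hY with rfl | rfl <;> (rw [Fin.lt_def]; simp only [emb0]; omega)
  | vert B C =>
    rw [h] at hY; simp only [Rule2D.refs, List.mem_cons, List.mem_singleton,
      List.not_mem_nil, or_false] at hY
    have hB := Fin.lt_def.mp (G.acyclic A B (by rw [h]; simp [Rule2D.refs]))
    have hC := Fin.lt_def.mp (G.acyclic A C (by rw [h]; simp [Rule2D.refs]))
    rcases hY with rfl | rfl <;> (rw [Fin.lt_def]; simp only [emb0]; omega)

lemma acy1 (A : Fin G.V) : ∀ Y ∈ (rl G (emb1 G A)).refs, Y < emb1 G A := by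
  intro Y hY
  rw [rl_emb1] at hY
  cases h : G.rule A with
  | term a => rw [h] at hY; simp [Rule2D.refs] at hY
  | horiz B C =>
    rw [h] at hY; simp only [Rule2D.refs, List.mem_cons, List.mem_singleton,
      List.not_mem_nil, or_false] at hY
    have hB := Fin.lt_def.mp (G.acyclic A B (by rw [h]; simp [Rule2D.refs]))
    have hC := Fin.lt_def.mp (G.acyclic A C (by rw [h]; simp [Rule2D.refs]))
    rcases hY with rfl | rfl <;> (rw [Fin.lt_def]; simp only [emb1]; omega)
  | vert B C =>
    rw [h] at hY; simp only [Rule2D.refs, List.mem_cons, List.mem_singleton,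
      List.not_mem_nil, or_false] at hY
    have hB := Fin.lt_def.mp (G.acyclic A B (by rw [h]; simp [Rule2D.refs]))
    have hC := Fin.lt_def.mp (G.acyclic A C (by rw [h]; simp [Rule2D.refs]))
    rcases hY with rfl | rfl <;> (rw [Fin.lt_def]; simp only [emb1]; omega)

lemma fm_val_lt {B A : Fin G.V} (hBA : B < A) : fm G B < emb2 G A := by
  have hs := G.start.isLt
  have hB := Fin.lt_def.mp hBA
  rw [Fin.lt_def]
  cases h : G.rule B with
  | term a => cases a <;> simp only [fm, h, if_true, if_false, Bool.false_eq_true,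
      emb0, emb1, emb2] <;> omega
  | horiz B1 C1 => simp only [fm, h, emb2]; omega
  | vert B1 C1 => simp only [fm, h, emb2]; omega

lemma acy2 (A : Fin G.V) : ∀ Y ∈ (rl G (emb2 G A)).refs, Y < emb2 G A := by
  intro Y hY
  rw [rl_emb2] at hY
  cases h : G.rule A with
  | term a => rw [h] at hY; simp [Rule2D.refs] at hY
  | horiz B C =>
    rw [h] at hY; simp only [Rule2D.refs, List.mem_cons, List.mem_singleton,
      List.not_mem_nil, or_false] at hY
    have hB := G.acyclic A B (by rw [h]; simp [Rule2D.refs])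
    have hC := G.acyclic A C (by rw [h]; simp [Rule2D.refs])
    rcases hY with rfl | rfl
    · exact fm_val_lt hB
    · exact fm_val_lt hC
  | vert B C =>
    rw [h] at hY; simp only [Rule2D.refs, List.mem_cons, List.mem_singleton,
      List.not_mem_nil, or_false] at hY
    have hB := G.acyclic A B (by rw [h]; simp [Rule2D.refs])
    have hC := G.acyclic A C (by rw [h]; simp [Rule2D.refs])
    rcases hY with rfl | rfl
    · exact fm_val_lt hB
    · exact fm_val_lt hC

lemma rl_size0 (B : Fin G.V) : (rl G (emb0 G B)).size = (G.rule B).size := by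
  rw [rl_emb0]; cases h : G.rule B <;> simp [h, Rule2D.size]

lemma rl_size1 (B : Fin G.V) : (rl G (emb1 G B)).size = (G.rule B).size := by
  rw [rl_emb1]; cases h : G.rule B <;> simp [h, Rule2D.size]

lemma rl_size2 (B : Fin G.V) : (rl G (emb2 G B)).size = (G.rule B).size := by
  rw [rl_emb2]; cases h : G.rule B <;> simp [h, Rule2D.size]

lemma sum_range_add' (f : ℕ → ℕ) (m k : ℕ) :
    ∑ x ∈ Finset.range (m + k), f x
      = (∑ x ∈ Finset.range m, f x) + ∑ x ∈ Finset.range k, f (m + x) := by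
  induction k with
  | zero => simp
  | succ k ih =>
    have h : m + (k + 1) = (m + k) + 1 := rfl
    rw [h, Finset.sum_range_succ, Finset.sum_range_succ, ih]
    omega

lemma size_eq : (∑ X : Fin (3 * G.V), (rl G X).size) = 3 * G.size := by
  classical
  set g : ℕ → ℕ := fun x => if h : x < 3 * G.V then (rl G ⟨x, h⟩).size else 0 with hg
  set gg : ℕ → ℕ := fun x => if h : x < G.V then (G.rule ⟨x, h⟩).size else 0 with hgg
  have hsize : G.size = ∑ x ∈ Finset.range G.V, gg x := by
    rw [← Fin.sum_univ_eq_sum_range gg G.V]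
    unfold SLP2D.size
    refine Finset.sum_congr rfl fun B _ => ?_
    simp [hgg, B.isLt]
  have h1 : (∑ X : Fin (3 * G.V), (rl G X).size) = ∑ x ∈ Finset.range (3 * G.V), g x := by
    rw [← Fin.sum_univ_eq_sum_range g (3 * G.V)]
    refine Finset.sum_congr rfl fun X _ => ?_
    simp [hg, X.isLt]
  rw [h1, show 3 * G.V = G.V + (G.V + G.V) by ring, sum_range_add', sum_range_add']
  have e0 : ∑ x ∈ Finset.range G.V, g x = ∑ x ∈ Finset.range G.V, gg x := by
    refine Finset.sum_congr rfl fun x hx => ?_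
    rw [Finset.mem_range] at hx
    simp only [hg, hgg, dif_pos (show x < 3 * G.V by omega), dif_pos hx]
    exact rl_size0 ⟨x, hx⟩
  have e1 : (∑ x ∈ Finset.range G.V, g (G.V + x)) = ∑ x ∈ Finset.range G.V, gg x := by
    refine Finset.sum_congr rfl fun x hx => ?_
    rw [Finset.mem_range] at hx
    simp only [hg, hgg, dif_pos (show G.V + x < 3 * G.V by omega), dif_pos hx]
    exact rl_size1 ⟨x, hx⟩
  have e2 : (∑ x ∈ Finset.range G.V, g (G.V + (G.V + x))) = ∑ x ∈ Finset.range G.V, gg x := by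
    refine Finset.sum_congr rfl fun x hx => ?_
    rw [Finset.mem_range] at hx
    simp only [hg, hgg, dif_pos (show G.V + (G.V + x) < 3 * G.V by omega), dif_pos hx]
    have he : (⟨G.V + (G.V + x), by omega⟩ : Fin (3 * G.V)) = emb2 G ⟨x, hx⟩ := by
      apply Fin.ext; simp only [emb2]; omega
    rw [he, rl_size2]
  rw [e0, e1, e2, hsize]
  ring

end S8

theorem statement8 (n : ℕ) (D : ℕ → Bool) (G : SLP2D Bool)
    (hG : G.Generates 1 n (fun _ j => D j)) :
    ∃ G' : SLP2D (Bool × Bool),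
      G'.Generates n n (fun i j => (D i, D j)) ∧ G'.size ≤ 3 * G.size := by
  obtain ⟨hr1, hcn, hent0⟩ := hG
  have hent : ∀ j, j < n → G.ent G.start 0 j = D j := fun j hj =>
    hent0 0 j (by omega) hj
  have hn : 0 < n := hcn ▸ (S8.pos G G.start).2
  refine ⟨⟨3 * G.V, S8.rl G, S8.fm G G.start, S8.rws n G, S8.cls G, S8.en n D G, ?_, ?_⟩,
    ⟨?_, ?_, ?_⟩, ?_⟩
  · intro X Y hY
    rcases S8.exists_emb X with ⟨A, rfl⟩ | ⟨A, rfl⟩ | ⟨A, rfl⟩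
    · exact S8.acy0 A Y hY
    · exact S8.acy1 A Y hY
    · exact S8.acy2 A Y hY
  · intro X
    rcases S8.exists_emb X with ⟨A, rfl⟩ | ⟨A, rfl⟩ | ⟨A, rfl⟩
    · exact S8.consist0 A
    · exact S8.consist1 A
    · exact S8.consist2 hr1 hcn hent hn A
  · show S8.rws n G (S8.fm G G.start) = n
    rw [S8.fm_rows hcn, hr1, Nat.mul_one]
  · show S8.cls G (S8.fm G G.start) = n
    rw [S8.fm_cols hr1, hcn]
  · intro i j hi hj
    show S8.en n D G (S8.fm G G.start) i j = (D i, D j)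
    rw [S8.fm_ent hent hn G.start i j (by rw [hr1, Nat.mul_one]; exact hi)
      (by rw [hcn]; exact hj)]
    rw [Nat.mod_eq_of_lt hi, Nat.div_eq_of_lt hi, hent j hj]
  · show (∑ X : Fin (3 * G.V), (S8.rl G X).size) ≤ 3 * G.size
    rw [S8.size_eq]
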